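/- Every unique sink orientation of a grid has a unique source: if O is an orientation of [n₁] × ... × [n_r] in which every subgrid has exactly one sink, then the reversed orientation also has the property that the full grid has exactly one sink; equivalently O has exactly one source (vertex with all edges outgoing). -/

import Mathlib

/-- Two vertices of the grid are adjacent iff they differ in exactly one coordinate. -/
def GridAdj {r : Nat} {n : Fin r -> Nat} (x y : ∀ i, Fin (n i)) : Prop :=
  ∃ i, x i ≠ y i ∧ ∀ j, j ≠ i -> x j = y j

/-- `O` is an orientation of the grid graph: `O x y` means the edge `{x, y}` is directed from
`x` to `y`; only adjacent pairs carry an edge, and each edge gets exactly one direction. -/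
def IsGridOrientation {r : Nat} {n : Fin r -> Nat}
    (O : (∀ i, Fin (n i)) -> (∀ i, Fin (n i)) -> Prop) : Prop :=
  (∀ x y, O x y -> GridAdj x y) ∧ ∀ x y, GridAdj x y -> (O x y ↔ ¬ O y x)

/-- `x` is a sink of the subgrid `S`: it lies in `S` and all subgrid edges at `x` are incoming. -/
def IsSinkIn {r : Nat} {n : Fin r -> Nat} (O : (∀ i, Fin (n i)) -> (∀ i, Fin (n i)) -> Prop)
    (S : ∀ i, Finset (Fin (n i))) (x : ∀ i, Fin (n i)) : Prop :=
  (∀ i, x i ∈ S i) ∧ ∀ y, (∀ i, y i ∈ S i) -> GridAdj x y -> O y x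

/-- A unique sink orientation: every subgrid (product of nonempty subsets) has a unique sink. -/
def IsUSO {r : Nat} {n : Fin r -> Nat}
    (O : (∀ i, Fin (n i)) -> (∀ i, Fin (n i)) -> Prop) : Prop :=
  IsGridOrientation O ∧
    ∀ S : ∀ i, Finset (Fin (n i)), (∀ i, (S i).Nonempty) -> ∃! x, IsSinkIn O S x

open Finset

section Aux

open scoped Classical

variable {r : Nat} {n : Fin r → Nat}

/-- The set of in-neighbour values of `v` in coordinate `i`. -/
noncomputable def InSet (O : (∀ i, Fin (n i)) → (∀ i, Fin (n i)) → Prop)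
    (v : ∀ i, Fin (n i)) (i : Fin r) : Finset (Fin (n i)) :=
  univ.filter (fun b => b ≠ v i ∧ O (Function.update v i b) v)

variable {O : (∀ i, Fin (n i)) → (∀ i, Fin (n i)) → Prop}

lemma not_mem_inSet_self (v : ∀ i, Fin (n i)) (i : Fin r) : v i ∉ InSet O v i := by
  simp [InSet]

lemma gridAdj_update (v : ∀ i, Fin (n i)) (i : Fin r) (b : Fin (n i)) (hb : b ≠ v i) :
    GridAdj v (Function.update v i b) :=
  ⟨i, by simpa using hb.symm, fun j hj => by simp [Function.update_of_ne hj]⟩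

lemma gridAdj_eq_update {v y : ∀ i, Fin (n i)} (h : GridAdj v y) :
    ∃ i, y i ≠ v i ∧ y = Function.update v i (y i) := by
  obtain ⟨i, hne, hj⟩ := h
  refine ⟨i, hne.symm, funext fun j => ?_⟩
  rcases eq_or_ne j i with rfl | hji
  · simp
  · simp [Function.update_of_ne hji, (hj j hji).symm]

lemma isSinkIn_iff (S : ∀ i, Finset (Fin (n i))) (v : ∀ i, Fin (n i)) :
    IsSinkIn O S v ↔ ∀ i, v i ∈ S i ∧ S i ⊆ insert (v i) (InSet O v i) := by
  constructor
  · rintro ⟨h1, h2⟩ i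
    refine ⟨h1 i, fun b hb => ?_⟩
    rcases eq_or_ne b (v i) with rfl | hbv
    · exact mem_insert_self _ _
    · refine mem_insert_of_mem ?_
      have hmem : ∀ j, Function.update v i b j ∈ S j := by
        intro j
        rcases eq_or_ne j i with rfl | hji
        · simpa using hb
        · simpa [Function.update_of_ne hji] using h1 j
      have hyv := h2 _ hmem (gridAdj_update v i b hbv)
      simp only [InSet, mem_filter, mem_univ, true_and]
      exact ⟨hbv, hyv⟩
  · intro h
    refine ⟨fun i => (h i).1, fun y hy hadj => ?_⟩
    obtain ⟨i, hne, heq⟩ := gridAdj_eq_update hadj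
    have hmem := (h i).2 (hy i)
    rcases mem_insert.mp hmem with h' | h'
    · exact absurd h' hne
    · simp only [InSet, mem_filter, mem_univ, true_and] at h'
      have := h'.2
      rwa [← heq] at this

lemma source_iff (hOr : IsGridOrientation O) (v : ∀ i, Fin (n i)) :
    (∀ i, InSet O v i = ∅) ↔ ∀ y, GridAdj v y → O v y := by
  constructor
  · intro h y hadj
    obtain ⟨i, hne, heq⟩ := gridAdj_eq_update hadj
    have hnot : ¬ O y v := by
      intro hc
      have hmem : y i ∈ InSet O v i := by
        simp only [InSet, mem_filter, mem_univ, true_and]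
        exact ⟨hne, by rwa [← heq]⟩
      simp [h i] at hmem
    exact (hOr.2 v y hadj).mpr hnot
  · intro h i
    rw [Finset.eq_empty_iff_forall_notMem]
    intro b hb
    simp only [InSet, mem_filter, mem_univ, true_and] at hb
    obtain ⟨hbv, hOb⟩ := hb
    have hadj := gridAdj_update v i b hbv
    exact ((hOr.2 v _ hadj).mp (h _ hadj)) hOb

lemma sum_nonempty_sign {α : Type*} [Fintype α] [DecidableEq α] [Nonempty α] :
    ∑ A ∈ (univ : Finset (Finset α)).filter (·.Nonempty), (-1 : ℤ) ^ (A.card + 1) = 1 := by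
  have h0 : ∑ A ∈ (univ : Finset (Finset α)), (-1 : ℤ) ^ A.card = 0 := by
    rw [← Finset.powerset_univ, Finset.sum_powerset_neg_one_pow_card]
    simp [Finset.univ_nonempty.ne_empty]
  have hsplit := Finset.sum_filter_add_sum_filter_not (univ : Finset (Finset α))
      (·.Nonempty) (fun A => (-1 : ℤ) ^ A.card)
  have hneg : (univ : Finset (Finset α)).filter (fun A => ¬ A.Nonempty) = {∅} := by
    ext A
    simp [Finset.not_nonempty_iff_eq_empty]
  rw [hneg, h0] at hsplit
  simp only [Finset.sum_singleton, Finset.card_empty, pow_zero] at hsplit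
  have hval : ∑ A ∈ (univ : Finset (Finset α)).filter (·.Nonempty), (-1 : ℤ) ^ A.card = -1 := by
    linarith
  calc ∑ A ∈ (univ : Finset (Finset α)).filter (·.Nonempty), (-1 : ℤ) ^ (A.card + 1)
      = ∑ A ∈ (univ : Finset (Finset α)).filter (·.Nonempty), (-1 : ℤ) ^ A.card * (-1) := by
        refine Finset.sum_congr rfl fun A _ => ?_
        rw [pow_succ]
    _ = (∑ A ∈ (univ : Finset (Finset α)).filter (·.Nonempty), (-1 : ℤ) ^ A.card) * (-1) := by
        rw [Finset.sum_mul]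
    _ = 1 := by rw [hval]; ring

lemma mem_image_insert_powerset {α : Type*} [DecidableEq α] {a : α} {t : Finset α} (_ha : a ∉ t)
    {A : Finset α} : A ∈ t.powerset.image (insert a) ↔ a ∈ A ∧ A ⊆ insert a t := by
  constructor
  · intro hA
    obtain ⟨U, hU, rfl⟩ := Finset.mem_image.mp hA
    exact ⟨Finset.mem_insert_self _ _,
      Finset.insert_subset_insert _ (Finset.mem_powerset.mp hU)⟩
  · rintro ⟨haA, hsub⟩
    refine Finset.mem_image.mpr ⟨A.erase a, Finset.mem_powerset.mpr ?_, Finset.insert_erase haA⟩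
    intro x hx
    have hxA := Finset.mem_of_mem_erase hx
    rcases Finset.mem_insert.mp (hsub hxA) with h | h
    · exact absurd h (Finset.ne_of_mem_erase hx)
    · exact h

lemma sum_insert_powerset {α : Type*} [DecidableEq α] (a : α) (t : Finset α) (ha : a ∉ t) :
    ∑ A ∈ t.powerset.image (insert a), (-1 : ℤ) ^ (A.card + 1) =
      if t = ∅ then 1 else 0 := by
  rw [Finset.sum_image ?inj]
  case inj =>
    intro U hU U' hU' h
    have haU : a ∉ U := fun h' => ha (Finset.mem_powerset.mp hU h')
    have haU' : a ∉ U' := fun h' => ha (Finset.mem_powerset.mp hU' h')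
    rw [← Finset.erase_insert haU, ← Finset.erase_insert haU', h]
  have hcongr : ∀ U ∈ t.powerset, (-1 : ℤ) ^ ((insert a U).card + 1) = (-1 : ℤ) ^ U.card := by
    intro U hU
    have haU : a ∉ U := fun h' => ha (Finset.mem_powerset.mp hU h')
    rw [Finset.card_insert_of_notMem haU, pow_succ, pow_succ]
    ring
  rw [Finset.sum_congr rfl hcongr, Finset.sum_powerset_neg_one_pow_card]

lemma uso_key (hn : ∀ i, 0 < n i) (hO : IsUSO O) :
    ∃! x : ∀ i, Fin (n i), ∀ y, GridAdj x y → O x y := by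
  obtain ⟨hOr, hsink⟩ := hO
  -- the collection of all subgrids
  have h1 : ∑ S ∈ Fintype.piFinset
        (fun i => (univ : Finset (Finset (Fin (n i)))).filter (·.Nonempty)),
      (∏ i, (-1 : ℤ) ^ ((S i).card + 1)) = 1 := by
    rw [← Finset.prod_univ_sum
      (fun i => (univ : Finset (Finset (Fin (n i)))).filter (·.Nonempty))
      (fun i (A : Finset (Fin (n i))) => (-1 : ℤ) ^ (A.card + 1))]
    refine Finset.prod_eq_one fun i _ => ?_
    haveI : Nonempty (Fin (n i)) := ⟨⟨0, hn i⟩⟩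
    exact sum_nonempty_sign
  have h2 : ∀ S ∈ Fintype.piFinset
        (fun i => (univ : Finset (Finset (Fin (n i)))).filter (·.Nonempty)),
      ∑ v : (∀ i, Fin (n i)), (if IsSinkIn O S v then (1 : ℤ) else 0) = 1 := by
    intro S hS
    have hne : ∀ i, (S i).Nonempty := by
      intro i
      have := (Fintype.mem_piFinset.mp hS) i
      simpa using this
    obtain ⟨x, hx, hu⟩ := hsink S hne
    rw [Finset.sum_boole]
    norm_cast
    rw [Finset.card_eq_one]
    exact ⟨x, Finset.eq_singleton_iff_unique_mem.mpr
      ⟨Finset.mem_filter.mpr ⟨Finset.mem_univ _, hx⟩,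
       fun y hy => hu y (Finset.mem_filter.mp hy).2⟩⟩
  have h3 : ∀ v : (∀ i, Fin (n i)), ∑ S ∈ Fintype.piFinset
        (fun i => (univ : Finset (Finset (Fin (n i)))).filter (·.Nonempty)),
      (if IsSinkIn O S v then (∏ i, (-1 : ℤ) ^ ((S i).card + 1)) else 0)
      = (if (∀ i, InSet O v i = ∅) then (1 : ℤ) else 0) := by
    intro v
    rw [← Finset.sum_filter]
    have hTfilter : (Fintype.piFinset
          (fun i => (univ : Finset (Finset (Fin (n i)))).filter (·.Nonempty))).filter
          (fun S => IsSinkIn O S v)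
        = Fintype.piFinset (fun i => (InSet O v i).powerset.image (insert (v i))) := by
      ext S
      simp only [Finset.mem_filter, Fintype.mem_piFinset, Finset.mem_filter, Finset.mem_univ,
        true_and]
      rw [isSinkIn_iff]
      constructor
      · rintro ⟨hne, hs⟩ i
        exact (mem_image_insert_powerset (not_mem_inSet_self v i)).mpr (hs i)
      · intro h
        constructor
        · intro i
          have := (mem_image_insert_powerset (not_mem_inSet_self v i)).mp (h i)
          exact ⟨v i, this.1⟩
        · intro i
          exact (mem_image_insert_powerset (not_mem_inSet_self v i)).mp (h i)
    rw [hTfilter, ← Finset.prod_univ_sum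
      (fun i => (InSet O v i).powerset.image (insert (v i)))
      (fun i (A : Finset (Fin (n i))) => (-1 : ℤ) ^ (A.card + 1))]
    have hinner : ∀ i, ∑ A ∈ (InSet O v i).powerset.image (insert (v i)),
        (-1 : ℤ) ^ (A.card + 1) = if InSet O v i = ∅ then 1 else 0 :=
      fun i => sum_insert_powerset (v i) _ (not_mem_inSet_self v i)
    rw [Finset.prod_congr rfl (fun i _ => hinner i)]
    by_cases h : ∀ i, InSet O v i = ∅
    · simp [h]
    · rw [if_neg h]
      push_neg at h
      obtain ⟨i, hi⟩ := h
      exact Finset.prod_eq_zero (Finset.mem_univ i) (by simp [hi.ne_empty])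
  have h4 : ∑ v : (∀ i, Fin (n i)), (if (∀ i, InSet O v i = ∅) then (1 : ℤ) else 0) = 1 := by
    calc ∑ v : (∀ i, Fin (n i)), (if (∀ i, InSet O v i = ∅) then (1 : ℤ) else 0)
        = ∑ v : (∀ i, Fin (n i)), ∑ S ∈ Fintype.piFinset
            (fun i => (univ : Finset (Finset (Fin (n i)))).filter (·.Nonempty)),
            (if IsSinkIn O S v then (∏ i, (-1 : ℤ) ^ ((S i).card + 1)) else 0) := by
          exact Finset.sum_congr rfl fun v _ => (h3 v).symm
      _ = ∑ S ∈ Fintype.piFinset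
            (fun i => (univ : Finset (Finset (Fin (n i)))).filter (·.Nonempty)),
            ∑ v : (∀ i, Fin (n i)),
            (if IsSinkIn O S v then (∏ i, (-1 : ℤ) ^ ((S i).card + 1)) else 0) :=
          Finset.sum_comm
      _ = ∑ S ∈ Fintype.piFinset
            (fun i => (univ : Finset (Finset (Fin (n i)))).filter (·.Nonempty)),
            (∏ i, (-1 : ℤ) ^ ((S i).card + 1)) := by
          refine Finset.sum_congr rfl fun S hS => ?_
          have hS2 := h2 S hS
          calc ∑ v : (∀ i, Fin (n i)),
                (if IsSinkIn O S v then (∏ i, (-1 : ℤ) ^ ((S i).card + 1)) else 0)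
              = (∏ i, (-1 : ℤ) ^ ((S i).card + 1)) *
                ∑ v : (∀ i, Fin (n i)), (if IsSinkIn O S v then (1 : ℤ) else 0) := by
                rw [Finset.mul_sum]
                refine Finset.sum_congr rfl fun v _ => ?_
                by_cases h : IsSinkIn O S v <;> simp [h]
            _ = ∏ i, (-1 : ℤ) ^ ((S i).card + 1) := by rw [hS2, mul_one]
      _ = 1 := h1
  have hcard : ((univ : Finset (∀ i, Fin (n i))).filter
      (fun v => ∀ i, InSet O v i = ∅)).card = 1 := by
    rw [Finset.sum_boole] at h4
    exact_mod_cast h4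
  obtain ⟨x, hx⟩ := Finset.card_eq_one.mp hcard
  have hx' := Finset.eq_singleton_iff_unique_mem.mp hx
  refine ⟨x, (source_iff hOr x).mp (Finset.mem_filter.mp hx'.1).2, fun y hy => ?_⟩
  exact hx'.2 y (Finset.mem_filter.mpr ⟨Finset.mem_univ _, (source_iff hOr y).mpr hy⟩)

end Aux

/-- in a USO, the reversed orientation has a unique sink on the full grid;
equivalently, the USO has exactly one source (vertex with all incident edges outgoing). -/
theorem uso_unique_source (r : Nat) (n : Fin r -> Nat) (hn : ∀ i, 0 < n i)
    (O : (∀ i, Fin (n i)) -> (∀ i, Fin (n i)) -> Prop) (hO : IsUSO O) :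
    (∃! x : ∀ i, Fin (n i),
        IsSinkIn (fun a b => O b a) (fun _ => Finset.univ) x) ∧
    (∃! x : ∀ i, Fin (n i), ∀ y, GridAdj x y -> O x y) := by
  obtain ⟨x, hx, hu⟩ := uso_key hn hO
  constructor
  · refine ⟨x, ⟨fun i => Finset.mem_univ _, fun y _ hadj => hx y hadj⟩, fun y hy => ?_⟩
    exact hu y (fun z hz => hy.2 z (fun i => Finset.mem_univ _) hz)
  · exact ⟨x, hx, hu⟩
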